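/- Let A be a commutative ring, I = ⟨a_1,...,a_n⟩ an ideal generated by a unimodular row's first n entries, where (a_1,...,a_{n+1}) is unimodular. Then the map of A/I-modules (A/I)^n → I/I² induced by the classes of (a_1,...,a_{n-1}, a_n a_{n+1}) is surjective. -/

import Mathlib

/-- Lemma (`genidealgenbyunimod`, middle part): if `(a₁, …, a_{n+1})` is a unimodular row and
`I = ⟨a₁, …, aₙ⟩`, then the map `(A/I)ⁿ → I/I²` induced by the classes of
`(a₁, …, a_{n-1}, aₙ·a_{n+1})` is surjective; equivalently, these classes generate the
`A/I`-module `I/I²`. (Indices are 0-based below: `g` is the generating family.) -/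
theorem cotangent_generated_by_twisted_row {A : Type*} [CommRing A] (n : ℕ) (hn : 1 ≤ n)
    (a : Fin (n + 1) → A) (ha : Ideal.span (Set.range a) = ⊤)
    (I : Ideal A) (hI : I = Ideal.span (Set.range fun i : Fin n => a i.castSucc))
    (g : Fin n → A)
    (hg₁ : ∀ i : Fin n, (i : ℕ) < n - 1 → g i = a i.castSucc)
    (hg₂ : ∀ i : Fin n, (i : ℕ) = n - 1 → g i = a i.castSucc * a (Fin.last n))
    (hgI : ∀ i : Fin n, g i ∈ I) :
    Submodule.span (A ⧸ I) (Set.range fun i : Fin n => I.toCotangent ⟨g i, hgI i⟩) = ⊤ := by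
  -- Each `a i.castSucc` is in `I`.
  have haI : ∀ i : Fin n, a i.castSucc ∈ I := fun i => by
    rw [hI]; exact Ideal.subset_span ⟨i, rfl⟩
  -- The last entry is invertible mod `I`.
  have h1 : (1 : A) ∈ Ideal.span (Set.range a) := by rw [ha]; trivial
  obtain ⟨f, hf⟩ : ∃ f : Fin (n + 1) → A, ∑ i, f i • a i = 1 :=
    (Submodule.mem_span_range_iff_exists_fun A).mp h1
  set c := f (Fin.last n) with hc_def
  have hc : c * a (Fin.last n) - 1 ∈ I := by
    rw [Fin.sum_univ_castSucc] at hf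
    have : c * a (Fin.last n) - 1 = -(∑ i : Fin n, f i.castSucc * a i.castSucc) := by
      simp only [smul_eq_mul] at hf
      linear_combination hf
    rw [this]
    exact neg_mem (Submodule.sum_mem _ fun i _ => Ideal.mul_mem_left _ _ (haI i))
  rw [eq_top_iff]
  rintro x -
  obtain ⟨⟨y, hy⟩, rfl⟩ := I.toCotangent_surjective x
  have hy' : y ∈ Ideal.span (Set.range fun i : Fin n => a i.castSucc) := hI ▸ hy
  refine Submodule.span_induction
    (p := fun y hyI => I.toCotangent ⟨y, hI ▸ hyI⟩ ∈
      Submodule.span (A ⧸ I) (Set.range fun i : Fin n => I.toCotangent ⟨g i, hgI i⟩))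
    ?_ ?_ ?_ ?_ hy'
  · rintro _ ⟨i, rfl⟩
    rcases lt_or_eq_of_le (Nat.le_sub_one_of_lt i.isLt) with h | h
    · have : (⟨a i.castSucc, haI i⟩ : I) = ⟨g i, hgI i⟩ := Subtype.ext (hg₁ i h).symm
      have heq : I.toCotangent ⟨a i.castSucc, hI ▸ Ideal.subset_span ⟨i, rfl⟩⟩
          = I.toCotangent ⟨g i, hgI i⟩ := by rw [← this]
      rw [heq]
      exact Submodule.subset_span ⟨i, rfl⟩
    · -- here `g i = a i * a_last`, and `c * g i ≡ a i mod I²`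
      have hgi := hg₂ i h
      have key : I.toCotangent ⟨a i.castSucc, hI ▸ Ideal.subset_span ⟨i, rfl⟩⟩
          = (Ideal.Quotient.mk I c) • I.toCotangent ⟨g i, hgI i⟩ := by
        have h3 : (Ideal.Quotient.mk I c) • I.toCotangent ⟨g i, hgI i⟩
            = I.toCotangent (c • ⟨g i, hgI i⟩) := by
          rw [map_smul, ← Ideal.Quotient.algebraMap_eq, algebraMap_smul]
        rw [h3, Ideal.toCotangent_eq]
        show a i.castSucc - c • g i ∈ I ^ 2
        have h4 : a i.castSucc - c • g i = -((c * a (Fin.last n) - 1) * a i.castSucc) := by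
          rw [hgi, smul_eq_mul]; ring
        rw [h4, pow_two]
        exact neg_mem (Ideal.mul_mem_mul hc (haI i))
      rw [key]
      exact Submodule.smul_mem _ _ (Submodule.subset_span ⟨i, rfl⟩)
  · have h0 : (⟨(0 : A), hI ▸ Submodule.zero_mem _⟩ : I) = 0 := rfl
    rw [h0, map_zero]; exact Submodule.zero_mem _
  · intro x y hx hy hpx hpy
    have hxy : (⟨x + y, hI ▸ Submodule.add_mem _ hx hy⟩ : I)
        = ⟨x, hI ▸ hx⟩ + ⟨y, hI ▸ hy⟩ := rfl
    rw [hxy, map_add]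
    exact Submodule.add_mem _ hpx hpy
  · intro r x hx hpx
    have hrx : (⟨r • x, hI ▸ Submodule.smul_mem _ r hx⟩ : I) = r • ⟨x, hI ▸ hx⟩ := rfl
    rw [hrx, map_smul, ← algebraMap_smul (A ⧸ I) r]
    exact Submodule.smul_mem _ _ hpx
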